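/- Let f: R^{2n×2n} → R be differentiable, M symplectic, and ∇f_M the Euclidean gradient at M. Then G := ∇f_M M^T M + J_{2n} M (∇f_M)^T J_{2n} M is a tangent vector to Sp(2n,R) at M, i.e., M^+ G is Hamiltonian (equivalently G M^+ = -M(G)^+ , i.e., (GM^+)^+ = -GM^+). -/
import Mathlib


open Matrix

noncomputable section

/-- The standard symplectic matrix `J = [[0, I],[-I, 0]]` of size `2m`. -/
def Jmat (m : ℕ) : Matrix (Fin m ⊕ Fin m) (Fin m ⊕ Fin m) ℝ :=
  Matrix.fromBlocks 0 1 (-1) 0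

/-- The symplectic inverse `A⁺ = J₂ₖᵀ Aᵀ J₂ₙ` of a `2n × 2k` real matrix. -/
def sympInv {n k : ℕ} (A : Matrix (Fin n ⊕ Fin n) (Fin k ⊕ Fin k) ℝ) :
    Matrix (Fin k ⊕ Fin k) (Fin n ⊕ Fin n) ℝ :=
  (Jmat k)ᵀ * Aᵀ * Jmat n

lemma Jmat_transpose (m : ℕ) : (Jmat m)ᵀ = -Jmat m := by
  simp [Jmat, Matrix.fromBlocks_transpose, Matrix.fromBlocks_neg]

lemma Jmat_sq (m : ℕ) : Jmat m * Jmat m = -1 := by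
  rw [show (-1 : Matrix (Fin m ⊕ Fin m) (Fin m ⊕ Fin m) ℝ) = Matrix.fromBlocks (-1) 0 0 (-1) by
    rw [← Matrix.fromBlocks_one, Matrix.fromBlocks_neg]; norm_num]
  simp [Jmat, Matrix.fromBlocks_multiply]

lemma Jmat_mul_Jmat (m : ℕ) (X : Matrix (Fin m ⊕ Fin m) (Fin m ⊕ Fin m) ℝ) :
    Jmat m * (Jmat m * X) = -X := by
  rw [← Matrix.mul_assoc, Jmat_sq]; simp

theorem stmt_16 (n : ℕ) (M G gradf : Matrix (Fin n ⊕ Fin n) (Fin n ⊕ Fin n) ℝ)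
    (hM : sympInv M * M = 1)
    (hG : G = gradf * Mᵀ * M + Jmat n * M * gradfᵀ * Jmat n * M) :
    sympInv (sympInv M * G) = -(sympInv M * G) := by
  subst hG
  simp only [sympInv, Jmat_transpose, transpose_mul, transpose_neg, transpose_transpose,
    Matrix.transpose_add, Matrix.neg_mul, Matrix.mul_neg, Matrix.add_mul, Matrix.mul_add,
    neg_neg, neg_add, Matrix.mul_assoc, Jmat_mul_Jmat, Jmat_sq, Matrix.mul_one]
  abel
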